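/- The algebra H^L of a weak Hopf algebra H is a left H-module algebra via the action h·l := Π^L(hl); in particular 1·l = l, h·(l l') agrees with (h^{(1)}·l)(h^{(2)}·l'), and h·(g·l) = (hg)·l for h,g ∈ H and l, l' ∈ H^L. -/
import Mathlib


open TensorProduct

namespace WeakHopfPaper

variable (k H : Type*) [Field k] [Ring H] [Algebra k H] [Coalgebra k H]

/-- `Π^L h = ε(1⁽¹⁾ h) • 1⁽²⁾`, built as `(ε ⊗ id)(Δ(1) · (h ⊗ 1))`. -/
noncomputable def PiL : H →ₗ[k] H :=
  (TensorProduct.lid k H).toLinearMap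
    ∘ₗ TensorProduct.map (Coalgebra.counit (R := k)) LinearMap.id
    ∘ₗ LinearMap.mulLeft k (Coalgebra.comul (R := k) (1 : H))
    ∘ₗ (TensorProduct.mk k H H).flip 1

/-- `Π^R h = 1⁽¹⁾ • ε(h 1⁽²⁾)`, built as `(id ⊗ ε)((1 ⊗ h) · Δ(1))`. -/
noncomputable def PiR : H →ₗ[k] H :=
  (TensorProduct.rid k H).toLinearMap
    ∘ₗ TensorProduct.map LinearMap.id (Coalgebra.counit (R := k))
    ∘ₗ LinearMap.mulRight k (Coalgebra.comul (R := k) (1 : H))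
    ∘ₗ TensorProduct.mk k H H 1

/-- `Π̄^L h = 1⁽¹⁾ • ε(1⁽²⁾ h)`, built as `(id ⊗ ε)(Δ(1) · (1 ⊗ h))`. -/
noncomputable def PiLbar : H →ₗ[k] H :=
  (TensorProduct.rid k H).toLinearMap
    ∘ₗ TensorProduct.map LinearMap.id (Coalgebra.counit (R := k))
    ∘ₗ LinearMap.mulLeft k (Coalgebra.comul (R := k) (1 : H))
    ∘ₗ TensorProduct.mk k H H 1

/-- `Π̄^R h = ε(h 1⁽¹⁾) • 1⁽²⁾`, built as `(ε ⊗ id)((h ⊗ 1) · Δ(1))`. -/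
noncomputable def PiRbar : H →ₗ[k] H :=
  (TensorProduct.lid k H).toLinearMap
    ∘ₗ TensorProduct.map (Coalgebra.counit (R := k)) LinearMap.id
    ∘ₗ LinearMap.mulRight k (Coalgebra.comul (R := k) (1 : H))
    ∘ₗ (TensorProduct.mk k H H).flip 1

/-- A weak bialgebra: an algebra and coalgebra such that `Δ` is multiplicative,
`Δ²(1) = (Δ(1)⊗1)(1⊗Δ(1)) = (1⊗Δ(1))(Δ(1)⊗1)` and
`ε(hlm) = ε(h l⁽¹⁾)ε(l⁽²⁾ m) = ε(h l⁽²⁾)ε(l⁽¹⁾ m)`. -/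
class WeakBialgebra : Prop where
  comul_mul : ∀ x y : H,
    Coalgebra.comul (R := k) (x * y) =
      Coalgebra.comul (R := k) x * Coalgebra.comul (R := k) y
  comul_one_left :
    (TensorProduct.map (Coalgebra.comul (R := k)) LinearMap.id)
        (Coalgebra.comul (R := k) (1 : H)) =
      (Coalgebra.comul (R := k) (1 : H) ⊗ₜ[k] (1 : H)) *
        ((TensorProduct.assoc k H H H).symm
          ((1 : H) ⊗ₜ[k] Coalgebra.comul (R := k) (1 : H)))
  comul_one_right :
    (TensorProduct.map (Coalgebra.comul (R := k)) LinearMap.id)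
        (Coalgebra.comul (R := k) (1 : H)) =
      ((TensorProduct.assoc k H H H).symm
          ((1 : H) ⊗ₜ[k] Coalgebra.comul (R := k) (1 : H))) *
        (Coalgebra.comul (R := k) (1 : H) ⊗ₜ[k] (1 : H))
  counit_left : ∀ h l m : H,
    Coalgebra.counit (R := k) (h * l * m) =
      LinearMap.mul' k k
        ((TensorProduct.map
          (Coalgebra.counit (R := k) ∘ₗ LinearMap.mulLeft k h)
          (Coalgebra.counit (R := k) ∘ₗ LinearMap.mulRight k m))
          (Coalgebra.comul (R := k) l))
  counit_right : ∀ h l m : H,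
    Coalgebra.counit (R := k) (h * l * m) =
      LinearMap.mul' k k
        ((TensorProduct.map
          (Coalgebra.counit (R := k) ∘ₗ LinearMap.mulLeft k h)
          (Coalgebra.counit (R := k) ∘ₗ LinearMap.mulRight k m))
          ((TensorProduct.comm k H H) (Coalgebra.comul (R := k) l)))


/-- `S` is an antipode for the weak bialgebra `H`:
`h⁽¹⁾S(h⁽²⁾) = Π^L(h)`, `S(h⁽¹⁾)h⁽²⁾ = Π^R(h)` and `S(h⁽¹⁾)h⁽²⁾S(h⁽³⁾) = S(h)`. -/
def IsWeakAntipode (S : H →ₗ[k] H) : Prop :=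
  (∀ h : H, LinearMap.mul' k H
      ((TensorProduct.map LinearMap.id S) (Coalgebra.comul (R := k) h)) = PiL k H h) ∧
  (∀ h : H, LinearMap.mul' k H
      ((TensorProduct.map S LinearMap.id) (Coalgebra.comul (R := k) h)) = PiR k H h) ∧
  (∀ h : H, LinearMap.mul' k H
      ((TensorProduct.map (LinearMap.mul' k H ∘ₗ TensorProduct.map S LinearMap.id) S)
        ((TensorProduct.map (Coalgebra.comul (R := k)) LinearMap.id)
          (Coalgebra.comul (R := k) h))) = S h)

/-! ### Auxiliary development for the proof -/

section Aux

variable {k H}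

theorem piL_def' (h : H) : PiL k H h =
    (TensorProduct.lid k H) (TensorProduct.map (Coalgebra.counit (R := k)) LinearMap.id
      (Coalgebra.comul (R := k) (1 : H) * (h ⊗ₜ[k] (1 : H)))) := rfl

theorem piR_def' (h : H) : PiR k H h =
    (TensorProduct.rid k H) (TensorProduct.map LinearMap.id (Coalgebra.counit (R := k))
      (((1 : H) ⊗ₜ[k] h) * Coalgebra.comul (R := k) (1 : H))) := rfl

/-- Convolution product of linear endomorphisms of `H`. -/
noncomputable def conv (f g : H →ₗ[k] H) : H →ₗ[k] H :=
  LinearMap.mul' k H ∘ₗ TensorProduct.map f g ∘ₗ Coalgebra.comul (R := k)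

theorem conv_apply (f g : H →ₗ[k] H) (h : H) :
    conv f g h = LinearMap.mul' k H
      (TensorProduct.map f g (Coalgebra.comul (R := k) h)) := rfl

set_option synthInstance.maxHeartbeats 1000000 in
/-- Convolution is associative. -/
theorem conv_assoc (f g p : H →ₗ[k] H) : conv (conv f g) p = conv f (conv g p) := by
  ext x
  have h1 : ∀ t : H ⊗[k] H,
      LinearMap.mul' k H (TensorProduct.map (conv f g) p t)
      = (LinearMap.mul' k H ∘ₗ
          TensorProduct.map (LinearMap.mul' k H ∘ₗ TensorProduct.map f g) p)
          ((LinearMap.rTensor H (Coalgebra.comul (R := k))) t) := by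
    intro t
    induction t using TensorProduct.induction_on with
    | zero => simp
    | tmul a b => simp [conv_apply]
    | add t₁ t₂ ih₁ ih₂ => simp only [map_add] at *; rw [ih₁, ih₂]
  have h2 : ∀ t : H ⊗[k] H,
      LinearMap.mul' k H (TensorProduct.map f (conv g p) t)
      = (LinearMap.mul' k H ∘ₗ
          TensorProduct.map f (LinearMap.mul' k H ∘ₗ TensorProduct.map g p))
          ((LinearMap.lTensor H (Coalgebra.comul (R := k))) t) := by
    intro t
    induction t using TensorProduct.induction_on with
    | zero => simp
    | tmul a b => simp [conv_apply]
    | add t₁ t₂ ih₁ ih₂ => simp only [map_add] at *; rw [ih₁, ih₂]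
  have h3 : ∀ T : (H ⊗[k] H) ⊗[k] H,
      (LinearMap.mul' k H ∘ₗ
          TensorProduct.map (LinearMap.mul' k H ∘ₗ TensorProduct.map f g) p) T
      = (LinearMap.mul' k H ∘ₗ
          TensorProduct.map f (LinearMap.mul' k H ∘ₗ TensorProduct.map g p))
          ((TensorProduct.assoc k H H H) T) := by
    intro T
    induction T using TensorProduct.induction_on with
    | zero => simp
    | tmul tb c =>
        induction tb using TensorProduct.induction_on with
        | zero => simp
        | tmul a b => simp [assoc_tmul, mul_assoc]
        | add s₁ s₂ ih₁ ih₂ =>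
            simp only [TensorProduct.add_tmul, map_add, LinearEquiv.map_add] at *
            rw [ih₁, ih₂]
    | add T₁ T₂ ih₁ ih₂ =>
        simp only [map_add, LinearEquiv.map_add] at *
        rw [ih₁, ih₂]
  show LinearMap.mul' k H (TensorProduct.map (conv f g) p (Coalgebra.comul (R := k) x))
      = LinearMap.mul' k H (TensorProduct.map f (conv g p) (Coalgebra.comul (R := k) x))
  rw [h1, h2, h3, Coalgebra.coassoc_apply]

theorem conv_mulRight_right (f g : H →ₗ[k] H) (c : H) :
    conv f (LinearMap.mulRight k c ∘ₗ g) = LinearMap.mulRight k c ∘ₗ conv f g := by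
  ext x
  show LinearMap.mul' k H (TensorProduct.map f (LinearMap.mulRight k c ∘ₗ g)
      (Coalgebra.comul (R := k) x))
    = LinearMap.mul' k H (TensorProduct.map f g (Coalgebra.comul (R := k) x)) * c
  generalize Coalgebra.comul (R := k) x = t
  induction t using TensorProduct.induction_on with
  | zero => simp
  | tmul a b => simp [mul_assoc]
  | add t₁ t₂ ih₁ ih₂ => simp only [map_add, add_mul] at *; rw [ih₁, ih₂]

theorem conv_mulLeft_left (f g : H →ₗ[k] H) (c : H) :
    conv (LinearMap.mulLeft k c ∘ₗ f) g = LinearMap.mulLeft k c ∘ₗ conv f g := by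
  ext x
  show LinearMap.mul' k H (TensorProduct.map (LinearMap.mulLeft k c ∘ₗ f) g
      (Coalgebra.comul (R := k) x))
    = c * LinearMap.mul' k H (TensorProduct.map f g (Coalgebra.comul (R := k) x))
  generalize Coalgebra.comul (R := k) x = t
  induction t using TensorProduct.induction_on with
  | zero => simp
  | tmul a b => simp [mul_assoc]
  | add t₁ t₂ ih₁ ih₂ => simp only [map_add, mul_add] at *; rw [ih₁, ih₂]

theorem conv_mulRight_mulLeft (f g : H →ₗ[k] H) (a b : H) :
    conv (LinearMap.mulRight k a ∘ₗ f) (LinearMap.mulLeft k b ∘ₗ g)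
      = conv (LinearMap.mulRight k (a * b) ∘ₗ f) g := by
  ext x
  show LinearMap.mul' k H (TensorProduct.map (LinearMap.mulRight k a ∘ₗ f)
        (LinearMap.mulLeft k b ∘ₗ g) (Coalgebra.comul (R := k) x))
    = LinearMap.mul' k H (TensorProduct.map (LinearMap.mulRight k (a * b) ∘ₗ f) g
        (Coalgebra.comul (R := k) x))
  generalize Coalgebra.comul (R := k) x = t
  induction t using TensorProduct.induction_on with
  | zero => simp
  | tmul u v => simp [mul_assoc]
  | add t₁ t₂ ih₁ ih₂ => simp only [map_add] at *; rw [ih₁, ih₂]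

/-- `y` satisfies the two characteristic comultiplication identities of `H^L`. -/
def IsHL (y : H) : Prop :=
  Coalgebra.comul (R := k) y
      = Coalgebra.comul (R := k) (1 : H) * (y ⊗ₜ[k] (1 : H)) ∧
  Coalgebra.comul (R := k) y
      = (y ⊗ₜ[k] (1 : H)) * Coalgebra.comul (R := k) (1 : H)

variable [WeakBialgebra k H]

theorem isHL_mul {y y' : H} (hy : IsHL (k := k) y) (hy' : IsHL (k := k) y') :
    IsHL (k := k) (y * y') := by
  obtain ⟨hy1, hy2⟩ := hy
  obtain ⟨hy'1, hy'2⟩ := hy'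
  have cm := WeakBialgebra.comul_mul (k := k) (H := H)
  have key : Coalgebra.comul (R := k) y * (y' ⊗ₜ[k] (1:H))
      = Coalgebra.comul (R := k) (y * y') := by
    rw [cm, hy'1, ← mul_assoc, ← cm, mul_one]
  constructor
  · rw [← key, hy1, mul_assoc, Algebra.TensorProduct.tmul_mul_tmul, mul_one]
  · rw [cm, hy2, mul_assoc, ← cm, one_mul, hy'2, ← mul_assoc,
      Algebra.TensorProduct.tmul_mul_tmul, mul_one]

theorem isHL_piL (x : H) : IsHL (k := k) (PiL k H x) := by
  set F : H ⊗[k] (H ⊗[k] H) →ₗ[k] H ⊗[k] H :=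
    (TensorProduct.lid k (H ⊗[k] H)).toLinearMap
      ∘ₗ TensorProduct.map (Coalgebra.counit (R := k) ∘ₗ LinearMap.mulRight k x)
          LinearMap.id with hF
  have e1 : ∀ t : H ⊗[k] H,
      Coalgebra.comul (R := k) ((TensorProduct.lid k H)
        (TensorProduct.map (Coalgebra.counit (R := k)) LinearMap.id (t * (x ⊗ₜ[k] (1:H)))))
      = F ((LinearMap.lTensor H (Coalgebra.comul (R := k))) t) := by
    intro t
    induction t using TensorProduct.induction_on with
    | zero => simp
    | tmul a b =>
        simp [hF, Algebra.TensorProduct.tmul_mul_tmul, mul_one]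
    | add t₁ t₂ ih₁ ih₂ =>
        simp only [add_mul, map_add, LinearEquiv.map_add] at *
        rw [ih₁, ih₂]
  have e2 : Coalgebra.comul (R := k) (PiL k H x)
      = F ((TensorProduct.assoc k H H H)
          ((TensorProduct.map (Coalgebra.comul (R := k)) LinearMap.id)
            (Coalgebra.comul (R := k) (1 : H)))) := by
    rw [piL_def', e1, ← Coalgebra.coassoc_apply]
    rfl
  constructor
  · have main : ∀ s t : H ⊗[k] H,
        F ((TensorProduct.assoc k H H H)
            (((TensorProduct.assoc k H H H).symm ((1:H) ⊗ₜ[k] t)) * (s ⊗ₜ[k] (1:H))))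
        = t * (((TensorProduct.lid k H)
            (TensorProduct.map (Coalgebra.counit (R := k)) LinearMap.id
              (s * (x ⊗ₜ[k] (1:H))))) ⊗ₜ[k] (1:H)) := by
      intro s t
      induction s using TensorProduct.induction_on with
      | zero => simp
      | tmul a b =>
          induction t using TensorProduct.induction_on with
          | zero => simp
          | tmul u v =>
              simp [hF, Algebra.TensorProduct.tmul_mul_tmul, assoc_symm_tmul, assoc_tmul,
                mul_smul_comm, smul_tmul', mul_one, one_mul]
          | add t₁ t₂ ih₁ ih₂ =>
              simp only [TensorProduct.tmul_add, map_add, add_mul, mul_add,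
                LinearEquiv.map_add] at *
              rw [ih₁, ih₂]
      | add s₁ s₂ ih₁ ih₂ =>
          simp only [TensorProduct.add_tmul, map_add, add_mul, mul_add,
            LinearEquiv.map_add] at *
          rw [ih₁, ih₂]
    rw [e2, WeakBialgebra.comul_one_right (k := k) (H := H), main, ← piL_def']
  · have main : ∀ s t : H ⊗[k] H,
        F ((TensorProduct.assoc k H H H)
            ((s ⊗ₜ[k] (1:H)) * ((TensorProduct.assoc k H H H).symm ((1:H) ⊗ₜ[k] t))))
        = (((TensorProduct.lid k H)
            (TensorProduct.map (Coalgebra.counit (R := k)) LinearMap.id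
              (s * (x ⊗ₜ[k] (1:H))))) ⊗ₜ[k] (1:H)) * t := by
      intro s t
      induction s using TensorProduct.induction_on with
      | zero => simp
      | tmul a b =>
          induction t using TensorProduct.induction_on with
          | zero => simp
          | tmul u v =>
              simp [hF, Algebra.TensorProduct.tmul_mul_tmul, assoc_symm_tmul, assoc_tmul,
                smul_mul_assoc, smul_tmul', mul_one, one_mul]
          | add t₁ t₂ ih₁ ih₂ =>
              simp only [TensorProduct.tmul_add, map_add, add_mul, mul_add,
                LinearEquiv.map_add] at *
              rw [ih₁, ih₂]
      | add s₁ s₂ ih₁ ih₂ =>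
          simp only [TensorProduct.add_tmul, map_add, add_mul, mul_add,
            LinearEquiv.map_add] at *
          rw [ih₁, ih₂]
    rw [e2, WeakBialgebra.comul_one_left (k := k) (H := H), main, ← piL_def']

/-- `ε(g · Π^L h) = ε(g h)`. -/
theorem counit_mul_piL (g h : H) :
    Coalgebra.counit (R := k) (g * PiL k H h) = Coalgebra.counit (R := k) (g * h) := by
  have hc : Coalgebra.counit (R := k) (g * h) =
      LinearMap.mul' k k
        ((TensorProduct.map
          (Coalgebra.counit (R := k) ∘ₗ LinearMap.mulLeft k g)
          (Coalgebra.counit (R := k) ∘ₗ LinearMap.mulRight k h))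
          ((TensorProduct.comm k H H) (Coalgebra.comul (R := k) (1 : H)))) := by
    simpa using WeakBialgebra.counit_right (k := k) (H := H) g 1 h
  rw [hc, piL_def']
  generalize Coalgebra.comul (R := k) (1 : H) = t
  induction t using TensorProduct.induction_on with
  | zero => simp
  | tmul a b =>
      simp [Algebra.TensorProduct.tmul_mul_tmul, mul_smul_comm, mul_comm]
  | add t₁ t₂ ih₁ ih₂ =>
      simp only [add_mul, map_add, mul_add, LinearEquiv.map_add] at *
      rw [ih₁, ih₂]

/-- `Π^L(h · Π^L x) = Π^L(h x)`. -/
theorem piL_mul_piL (h x : H) : PiL k H (h * PiL k H x) = PiL k H (h * x) := by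
  have hy : ∀ g : H, Coalgebra.counit (R := k) (g * PiL k H x)
      = Coalgebra.counit (R := k) (g * x) := fun g => counit_mul_piL g x
  rw [piL_def' (h * PiL k H x), piL_def' (h * x)]
  generalize Coalgebra.comul (R := k) (1 : H) = t
  induction t using TensorProduct.induction_on with
  | zero => simp
  | tmul a b =>
      simp only [Algebra.TensorProduct.tmul_mul_tmul, TensorProduct.map_tmul,
        LinearMap.id_coe, id_eq, lid_tmul, mul_one, ← mul_assoc, hy]
  | add t₁ t₂ ih₁ ih₂ =>
      simp only [add_mul, map_add, LinearEquiv.map_add] at *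
      rw [ih₁, ih₂]

/-- Elements of `H^L` commute with the image of `Π^R`. -/
theorem piR_comm {y : H} (hy : IsHL (k := k) y) (g : H) :
    PiR k H g * y = y * PiR k H g := by
  set G : H ⊗[k] H →ₗ[k] H :=
    (TensorProduct.rid k H).toLinearMap
      ∘ₗ TensorProduct.map LinearMap.id (Coalgebra.counit (R := k) ∘ₗ LinearMap.mulLeft k g)
    with hG
  have e1 : ∀ t : H ⊗[k] H,
      ((TensorProduct.rid k H) (TensorProduct.map LinearMap.id (Coalgebra.counit (R := k))
        (((1:H) ⊗ₜ[k] g) * t))) * y = G (t * (y ⊗ₜ[k] (1:H))) := by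
    intro t
    induction t using TensorProduct.induction_on with
    | zero => simp
    | tmul u v =>
        simp [hG, Algebra.TensorProduct.tmul_mul_tmul, smul_mul_assoc, mul_one, one_mul]
    | add t₁ t₂ ih₁ ih₂ =>
        simp only [mul_add, add_mul, map_add, LinearEquiv.map_add] at *
        rw [ih₁, ih₂]
  have e2 : ∀ t : H ⊗[k] H,
      y * ((TensorProduct.rid k H) (TensorProduct.map LinearMap.id (Coalgebra.counit (R := k))
        (((1:H) ⊗ₜ[k] g) * t))) = G ((y ⊗ₜ[k] (1:H)) * t) := by
    intro t
    induction t using TensorProduct.induction_on with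
    | zero => simp
    | tmul u v =>
        simp [hG, Algebra.TensorProduct.tmul_mul_tmul, mul_smul_comm, mul_one, one_mul]
    | add t₁ t₂ ih₁ ih₂ =>
        simp only [mul_add, add_mul, map_add, LinearEquiv.map_add] at *
        rw [ih₁, ih₂]
  rw [piR_def', e1, e2, hy.1.symm.trans hy.2]

variable {S : H →ₗ[k] H} (hS : IsWeakAntipode k H S)
include hS

/-- For `y ∈ H^L`, `Π^L(h y) = h⁽¹⁾ y S(h⁽²⁾)`, in convolution form. -/
theorem conv_mulRight_S {y : H} (hy : IsHL (k := k) y) :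
    conv (LinearMap.mulRight k y) S = PiL k H ∘ₗ LinearMap.mulRight k y := by
  ext h
  have hd : Coalgebra.comul (R := k) (h * y)
      = Coalgebra.comul (R := k) h * (y ⊗ₜ[k] (1:H)) := by
    rw [WeakBialgebra.comul_mul (k := k) (H := H), hy.1, ← mul_assoc,
      ← WeakBialgebra.comul_mul (k := k) (H := H), mul_one]
  show LinearMap.mul' k H (TensorProduct.map (LinearMap.mulRight k y) S
      (Coalgebra.comul (R := k) h)) = PiL k H (h * y)
  rw [← hS.1 (h * y), hd]
  generalize Coalgebra.comul (R := k) h = t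
  induction t using TensorProduct.induction_on with
  | zero => simp
  | tmul a b => simp [Algebra.TensorProduct.tmul_mul_tmul, mul_one]
  | add t₁ t₂ ih₁ ih₂ =>
      simp only [map_add, add_mul] at *
      rw [ih₁, ih₂]

/-- `Π^R ⋆ S = S`. -/
theorem conv_piR_S : conv (PiR k H) S = S := by
  have h1 : PiR k H = (LinearMap.mul' k H ∘ₗ
      TensorProduct.map S LinearMap.id) ∘ₗ Coalgebra.comul (R := k) :=
    (LinearMap.ext fun h => hS.2.1 h).symm
  ext h
  show LinearMap.mul' k H (TensorProduct.map (PiR k H) S (Coalgebra.comul (R := k) h)) = S h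
  rw [← hS.2.2 h]
  congr 1
  rw [h1, show S = S ∘ₗ LinearMap.id from (LinearMap.comp_id S).symm]
  rw [TensorProduct.map_comp]
  simp [LinearMap.comp_apply]

/-- The main computation for the module-algebra property. -/
theorem piL_module_algebra (h : H) {l l' : H}
    (hl : IsHL (k := k) l) (hl' : IsHL (k := k) l') :
    PiL k H (h * (l * l')) =
      LinearMap.mul' k H
        ((TensorProduct.map
          ((PiL k H) ∘ₗ LinearMap.mulRight k l)
          ((PiL k H) ∘ₗ LinearMap.mulRight k l'))
          (Coalgebra.comul (R := k) h)) := by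
  have hSid : conv S LinearMap.id = PiR k H := LinearMap.ext fun x => hS.2.1 x
  have step1 : conv S (LinearMap.mulRight k l') = LinearMap.mulLeft k l' ∘ₗ PiR k H := by
    rw [show (LinearMap.mulRight k l' : H →ₗ[k] H)
        = LinearMap.mulRight k l' ∘ₗ LinearMap.id from (LinearMap.comp_id _).symm,
      conv_mulRight_right, hSid]
    exact LinearMap.ext fun g => piR_comm hl' g
  have step2 : conv S (conv (LinearMap.mulRight k l') S) = LinearMap.mulLeft k l' ∘ₗ S := by
    rw [← conv_assoc, step1, conv_mulLeft_left, conv_piR_S hS]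
  have rhs : LinearMap.mul' k H
        ((TensorProduct.map
          ((PiL k H) ∘ₗ LinearMap.mulRight k l)
          ((PiL k H) ∘ₗ LinearMap.mulRight k l'))
          (Coalgebra.comul (R := k) h))
      = conv ((PiL k H) ∘ₗ LinearMap.mulRight k l)
          ((PiL k H) ∘ₗ LinearMap.mulRight k l') h := rfl
  rw [rhs, ← conv_mulRight_S hS hl, ← conv_mulRight_S hS hl', conv_assoc, step2]
  have step3 : conv (LinearMap.mulRight k l) (LinearMap.mulLeft k l' ∘ₗ S)
      = conv (LinearMap.mulRight k (l * l')) S := by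
    rw [show (LinearMap.mulRight k l : H →ₗ[k] H)
        = LinearMap.mulRight k l ∘ₗ LinearMap.id from (LinearMap.comp_id _).symm,
      conv_mulRight_mulLeft,
      show (LinearMap.mulRight k (l * l') ∘ₗ LinearMap.id : H →ₗ[k] H)
        = LinearMap.mulRight k (l * l') from LinearMap.comp_id _]
  rw [step3, conv_mulRight_S hS (isHL_mul hl hl')]
  rfl

end Aux

/-- `H^L` is a left `H`-module algebra via `h·l := Π^L(hl)`:
`1·l = l`, `h·(ll') = (h⁽¹⁾·l)(h⁽²⁾·l')` and `h·(g·l) = (hg)·l` for `l, l' ∈ H^L`. -/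
theorem HL_moduleAlgebra [WeakBialgebra k H]
    (S : H →ₗ[k] H) (hS : IsWeakAntipode k H S) :
    (∀ l ∈ LinearMap.range (PiL k H), PiL k H ((1 : H) * l) = l) ∧
    (∀ (h : H), ∀ l ∈ LinearMap.range (PiL k H), ∀ l' ∈ LinearMap.range (PiL k H),
      PiL k H (h * (l * l')) =
        LinearMap.mul' k H
          ((TensorProduct.map
            ((PiL k H) ∘ₗ LinearMap.mulRight k l)
            ((PiL k H) ∘ₗ LinearMap.mulRight k l'))
            (Coalgebra.comul (R := k) h))) ∧
    (∀ (h g : H), ∀ l ∈ LinearMap.range (PiL k H),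
      PiL k H (h * PiL k H (g * l)) = PiL k H (h * g * l)) := by
  refine ⟨?_, ?_, ?_⟩
  · rintro l ⟨x, rfl⟩
    rw [one_mul]
    have h1 := piL_mul_piL (k := k) (H := H) 1 x
    rwa [one_mul, one_mul] at h1
  · rintro h l ⟨x, rfl⟩ l' ⟨x', rfl⟩
    exact piL_module_algebra hS h (isHL_piL x) (isHL_piL x')
  · rintro h g l -
    rw [piL_mul_piL, mul_assoc]

end WeakHopfPaper
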